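/- The discrete LIF operator with subtraction reset satisfies the Alexiewicz accuracy bound: for every input f ∈ ℝ^{N+1}, leakage β ∈ (0,1], and threshold θ > 0, the residual z_n - s_n satisfies |z_n - s_n| < θ for all n, where z and s are defined by the LIF recursion; equivalently ‖f - s‖_{A,β} < θ. -/

import Mathlib

/-- Truncation quantization toward zero to multiples of `θ`. -/
noncomputable def q (θ z : ℝ) : ℝ := Real.sign z * (θ * (⌊|z| / θ⌋ : ℤ))

/-- Discrete weighted Alexiewicz norm on `ℝ^{N+1}`. -/
noncomputable def anorm (β : ℝ) (N : ℕ) (f : ℕ → ℝ) : ℝ :=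
  Finset.sup' (Finset.range (N + 1)) (by simp)
    (fun n => |∑ k ∈ Finset.range (n + 1), β ^ (n - k) * f k|)

/-- Membrane potential of the discrete LIF recursion with subtraction reset;
the spike output at step `n` is `q θ (lifZ θ β f n)`. -/
noncomputable def lifZ (θ β : ℝ) (f : ℕ → ℝ) : ℕ → ℝ
  | 0 => f 0
  | k + 1 => f (k + 1) + β * (lifZ θ β f k - q θ (lifZ θ β f k))

lemma q_residual_lt (θ : ℝ) (hθ : 0 < θ) (z : ℝ) : |z - q θ z| < θ := by
  have hfl : (⌊|z| / θ⌋ : ℝ) ≤ |z| / θ := Int.floor_le _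
  have hfl' : |z| / θ < ⌊|z| / θ⌋ + 1 := Int.lt_floor_add_one _
  have h1 : θ * (⌊|z| / θ⌋ : ℤ) ≤ |z| := by
    have := mul_le_mul_of_nonneg_left hfl hθ.le
    rwa [mul_div_cancel₀ _ hθ.ne'] at this
  have h2 : |z| < θ * (⌊|z| / θ⌋ : ℤ) + θ := by
    have := mul_lt_mul_of_pos_left hfl' hθ
    rw [mul_div_cancel₀ _ hθ.ne'] at this
    linarith [this]
  rcases lt_trichotomy z 0 with hz | hz | hz
  · rw [abs_of_neg hz] at h1 h2
    rw [q, Real.sign_of_neg hz, abs_of_neg hz, abs_of_nonpos (by linarith)]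
    linarith
  · subst hz; simp [q]; exact hθ
  · rw [abs_of_pos hz] at h1 h2
    rw [q, Real.sign_of_pos hz, abs_of_pos hz, abs_of_nonneg (by linarith)]
    linarith

lemma sum_eq_residual (θ β : ℝ) (f : ℕ → ℝ) (n : ℕ) :
    ∑ k ∈ Finset.range (n + 1), β ^ (n - k) * (f k - q θ (lifZ θ β f k))
      = lifZ θ β f n - q θ (lifZ θ β f n) := by
  induction n with
  | zero => simp [lifZ]
  | succ n ih =>
      rw [Finset.sum_range_succ]
      have hstep : ∀ k ∈ Finset.range (n + 1),
          β ^ (n + 1 - k) * (f k - q θ (lifZ θ β f k))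
            = β * (β ^ (n - k) * (f k - q θ (lifZ θ β f k))) := by
        intro k hk
        rw [Finset.mem_range] at hk
        rw [show n + 1 - k = (n - k) + 1 by omega, pow_succ]
        ring
      rw [Finset.sum_congr rfl hstep, ← Finset.mul_sum, ih]
      simp [lifZ]
      ring

theorem lif_alexiewicz_accuracy (θ β : ℝ) (hθ : 0 < θ) (hβ : β ∈ Set.Ioc (0 : ℝ) 1)
    (N : ℕ) (f : ℕ → ℝ) :
    (∀ n, |lifZ θ β f n - q θ (lifZ θ β f n)| < θ) ∧
    anorm β N (fun k => f k - q θ (lifZ θ β f k)) < θ := by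
  refine ⟨fun n => q_residual_lt θ hθ _, ?_⟩
  rw [anorm, Finset.sup'_lt_iff]
  intro n _
  rw [sum_eq_residual]
  exact q_residual_lt θ hθ _
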